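/- Let R be a weakly Laskerian commutative ring and A a commutative R-algebra (e.g. a ring extension of R) that is finitely generated as an R-module. Then A is a weakly Laskerian ring. -/

import Mathlib

/-- An `R`-module `M` is *weakly Laskerian* if every quotient of `M` has only finitely many
associated prime ideals. -/
def IsWeaklyLaskerian (R : Type*) [CommRing R] (M : Type*) [AddCommGroup M]
    [Module R M] : Prop :=
  ∀ N : Submodule R M, (associatedPrimes R (M ⧸ N)).Finite

section Aux

variable {R : Type*} [CommRing R] {M M' : Type*} [AddCommGroup M] [Module R M]
  [AddCommGroup M'] [Module R M']

/-- Any associated prime of `M` is an associated prime of a submodule `N` or of `M ⧸ N`. -/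
theorem IsWeaklyLaskerian.assoc_subset_union (N : Submodule R M) :
    associatedPrimes R M ⊆ associatedPrimes R N ∪ associatedPrimes R (M ⧸ N) := by
  rintro I ⟨hI, x, hx⟩
  by_cases h : ∃ r : R, r ∉ I ∧ r • x ∈ N
  · obtain ⟨r, hrI, hrN⟩ := h
    left
    refine ⟨hI, ⟨r • x, hrN⟩, ?_⟩
    ext s
    constructor
    · intro hs
      rw [hx] at hs
      obtain ⟨n, hn⟩ := hs
      rw [Submodule.mem_colon_singleton, Submodule.mem_bot] at hn
      refine ⟨n, ?_⟩
      rw [Submodule.mem_colon_singleton, Submodule.mem_bot]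
      refine Subtype.ext ?_
      show (s ^ n) • r • x = 0
      rw [smul_comm, hn, smul_zero]
    · intro hs
      obtain ⟨n, hn⟩ := hs
      rw [Submodule.mem_colon_singleton, Submodule.mem_bot] at hn
      have h1 : (s ^ n * r) • x = 0 := by
        rw [mul_smul]; exact congrArg Subtype.val hn
      have hmem : s ^ n * r ∈ I := by
        rw [hx]
        exact Ideal.le_radical (Submodule.mem_colon_singleton.mpr (by rw [h1]; exact Submodule.zero_mem _))
      rcases hI.mem_or_mem hmem with h2 | h2
      · exact hI.mem_of_pow_mem n h2
      · exact absurd h2 hrI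
  · right
    push_neg at h
    refine ⟨hI, Submodule.Quotient.mk x, ?_⟩
    have hsub : (⊥ : Submodule R (M ⧸ N)).colon {Submodule.Quotient.mk x} ≤ I := by
      intro s hs
      rw [Submodule.mem_colon_singleton, Submodule.mem_bot, ← Submodule.Quotient.mk_smul,
        Submodule.Quotient.mk_eq_zero] at hs
      by_contra hsI
      exact h s hsI hs
    apply le_antisymm
    · intro s hs
      rw [hx] at hs
      obtain ⟨n, hn⟩ := hs
      rw [Submodule.mem_colon_singleton, Submodule.mem_bot] at hn
      refine ⟨n, ?_⟩
      rw [Submodule.mem_colon_singleton, Submodule.mem_bot, ← Submodule.Quotient.mk_smul, hn,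
        Submodule.Quotient.mk_zero]
    · exact (Ideal.radical_mono hsub).trans hI.radical.le

theorem IsWeaklyLaskerian.of_surjective (f : M →ₗ[R] M') (hf : Function.Surjective f)
    (h : IsWeaklyLaskerian R M) : IsWeaklyLaskerian R M' := by
  intro N
  have hs : Function.Surjective ((N.mkQ).comp f) := (N.mkQ_surjective).comp hf
  have e := ((N.mkQ.comp f).quotKerEquivOfSurjective hs)
  rw [← LinearEquiv.AssociatedPrimes.eq e]
  exact h _

theorem IsWeaklyLaskerian.finite_associatedPrimes (h : IsWeaklyLaskerian R M) :
    (associatedPrimes R M).Finite := by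
  have := h ⊥
  rwa [LinearEquiv.AssociatedPrimes.eq (Submodule.quotEquivOfEqBot (⊥ : Submodule R M) rfl)]
    at this

/-- Weakly Laskerian modules are closed under extensions. -/
theorem IsWeaklyLaskerian.of_extension (N : Submodule R M) (h1 : IsWeaklyLaskerian R N)
    (h2 : IsWeaklyLaskerian R (M ⧸ N)) : IsWeaklyLaskerian R M := by
  intro N'
  set K : Submodule R (M ⧸ N') := N.map N'.mkQ with hK
  have hfin1 : (associatedPrimes R K).Finite := by
    have hsurj : Function.Surjective
        (LinearMap.codRestrict K ((N'.mkQ).comp N.subtype)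
          (fun x => Submodule.mem_map_of_mem x.2)) := by
      rintro ⟨y, hy⟩
      obtain ⟨x, hx, rfl⟩ := hy
      exact ⟨⟨x, hx⟩, rfl⟩
    exact (h1.of_surjective _ hsurj).finite_associatedPrimes
  have hfin2 : (associatedPrimes R ((M ⧸ N') ⧸ K)).Finite := by
    have hle : N ≤ LinearMap.ker (K.mkQ.comp N'.mkQ) := by
      intro n hn
      have : N'.mkQ n ∈ K := Submodule.mem_map_of_mem hn
      simpa only [LinearMap.mem_ker, LinearMap.comp_apply, Submodule.mkQ_apply,
        Submodule.Quotient.mk_eq_zero] using this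
    have hsurj : Function.Surjective (N.liftQ (K.mkQ.comp N'.mkQ) hle) := by
      intro y
      obtain ⟨x, rfl⟩ := (K.mkQ_surjective.comp N'.mkQ_surjective) y
      exact ⟨Submodule.Quotient.mk x, rfl⟩
    exact (h2.of_surjective _ hsurj).finite_associatedPrimes
  exact ((hfin1.union hfin2).subset (IsWeaklyLaskerian.assoc_subset_union K))

/-- Over a weakly Laskerian ring, every finite module is weakly Laskerian. -/
theorem IsWeaklyLaskerian.of_finite (hR : IsWeaklyLaskerian R R) (M : Type*) [AddCommGroup M]
    [Module R M] [Module.Finite R M] : IsWeaklyLaskerian R M := by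
  obtain ⟨n, s, hs⟩ := Module.Finite.exists_fin (R := R) (M := M)
  clear ‹Module.Finite R M›
  induction n generalizing M with
  | zero =>
    have hsub : Subsingleton M := by
      constructor
      intro a b
      have ha : a ∈ Submodule.span R (Set.range s) := hs ▸ Submodule.mem_top
      have hb : b ∈ Submodule.span R (Set.range s) := hs ▸ Submodule.mem_top
      rw [Set.range_eq_empty s, Submodule.span_empty, Submodule.mem_bot] at ha hb
      rw [ha, hb]
    intro N
    have : Subsingleton (M ⧸ N) := N.mkQ_surjective.subsingleton
    rw [associatedPrimes.eq_empty_of_subsingleton]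
    exact Set.finite_empty
  | succ n ih =>
    set N : Submodule R M := R ∙ s 0 with hN
    apply IsWeaklyLaskerian.of_extension N
    · have hmem : ∀ r : R, LinearMap.toSpanSingleton R M (s 0) r ∈ N := fun r =>
        Submodule.smul_mem _ r (Submodule.mem_span_singleton_self _)
      have hsurj : Function.Surjective
          (LinearMap.codRestrict N (LinearMap.toSpanSingleton R M (s 0)) hmem) := by
        rintro ⟨y, hy⟩
        obtain ⟨r, rfl⟩ := Submodule.mem_span_singleton.mp hy
        exact ⟨r, rfl⟩
      exact hR.of_surjective _ hsurj
    · apply ih (M ⧸ N) (N.mkQ ∘ s ∘ Fin.succ)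
      have h1 : Submodule.span R (N.mkQ '' Set.range s) = ⊤ := by
        rw [← Submodule.map_span, hs, Submodule.map_top, Submodule.range_mkQ]
      rw [← Set.range_comp, Fin.range_fin_succ (N.mkQ ∘ s)] at h1
      have h0 : (N.mkQ ∘ s) 0 = 0 := by
        simp only [Function.comp_apply, Submodule.mkQ_apply, Submodule.Quotient.mk_eq_zero]
        exact Submodule.mem_span_singleton_self _
      rw [h0, Submodule.span_insert_zero] at h1
      have : Fin.tail (N.mkQ ∘ s) = N.mkQ ∘ s ∘ Fin.succ := rfl
      rw [← this]
      exact h1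

end Aux

open TensorProduct in
/-- A finite ring extension has finitely many primes lying over a given prime. -/
theorem IsWeaklyLaskerian.finite_primes_over {R A : Type*} [CommRing R] [CommRing A] [Algebra R A]
    [Module.Finite R A] (p : Ideal R) (hp : p.IsPrime) :
    {P : Ideal A | P.IsPrime ∧ Ideal.comap (algebraMap R A) P = p}.Finite := by
  classical
  haveI := hp
  let k := FractionRing (R ⧸ p)
  haveI : IsArtinianRing (k ⊗[R] A) := IsArtinianRing.of_finite k (k ⊗[R] A)
  have hfin : {Q : Ideal (k ⊗[R] A) | Q.IsPrime}.Finite :=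
    IsArtinianRing.setOfPred_isPrime_finite (k ⊗[R] A)
  apply Set.Finite.subset (hfin.image (fun Q =>
    Q.comap (Algebra.TensorProduct.includeRight (R := R) (A := k) (B := A)).toRingHom))
  rintro P ⟨hP, hc⟩
  haveI := hP
  have hle : p ≤ Ideal.comap (algebraMap R A) P := le_of_eq hc.symm
  let qm : R ⧸ p →+* A ⧸ P := Ideal.quotientMap P (algebraMap R A) hle
  have hqm : Function.Injective qm := Ideal.quotientMap_injective' (le_of_eq hc)
  let F := FractionRing (A ⧸ P)
  have hker : ∀ x : A ⧸ P, algebraMap (A ⧸ P) F x = 0 → x = 0 := fun x hx =>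
    IsFractionRing.injective (A ⧸ P) F (by rwa [map_zero])
  have hunits : ∀ y : nonZeroDivisors (R ⧸ p),
      IsUnit (((algebraMap (A ⧸ P) F).comp qm) y) := by
    intro y
    rw [isUnit_iff_ne_zero]
    intro h0
    have h1 : qm y = 0 := hker _ h0
    have h2 : (y : R ⧸ p) = 0 := hqm (by rwa [map_zero])
    exact nonZeroDivisors.ne_zero y.2 h2
  let g₁ : k →+* F := IsLocalization.lift (M := nonZeroDivisors (R ⧸ p)) hunits
  have hg₁ : ∀ x : R ⧸ p, g₁ (algebraMap (R ⧸ p) k x) = algebraMap (A ⧸ P) F (qm x) :=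
    fun x => IsLocalization.lift_eq hunits x
  let g₁' : k →ₐ[R] F :=
    { toRingHom := g₁
      commutes' := by
        intro r
        show g₁ (algebraMap R k r) = algebraMap R F r
        rw [IsScalarTower.algebraMap_apply R (R ⧸ p) k, hg₁,
          IsScalarTower.algebraMap_apply R (A ⧸ P) F]
        congr 1 }
  let g₂ : A →ₐ[R] F :=
    (IsScalarTower.toAlgHom R (A ⧸ P) F).comp (IsScalarTower.toAlgHom R A (A ⧸ P))
  let φ := Algebra.TensorProduct.productMap g₁' g₂
  haveI hQ : (RingHom.ker φ.toRingHom).IsPrime := RingHom.ker_isPrime φ.toRingHom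
  refine ⟨RingHom.ker φ.toRingHom, hQ, ?_⟩
  ext x
  simp only [Ideal.mem_comap, RingHom.mem_ker]
  show φ ((1 : k) ⊗ₜ[R] x) = 0 ↔ x ∈ P
  rw [Algebra.TensorProduct.productMap_apply_tmul, map_one, one_mul]
  show algebraMap (A ⧸ P) F (algebraMap A (A ⧸ P) x) = 0 ↔ x ∈ P
  constructor
  · intro h
    have h2 := hker _ h
    rwa [← Ideal.Quotient.eq_zero_iff_mem]
  · intro h
    rw [Ideal.Quotient.algebraMap_eq, Ideal.Quotient.eq_zero_iff_mem.mpr h, map_zero]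

/-- If `R` is a weakly Laskerian commutative ring and `A` is a commutative `R`-algebra
which is finitely generated as an `R`-module, then `A` is a weakly Laskerian ring. -/
theorem isWeaklyLaskerian_of_finite_algebra {R A : Type*} [CommRing R] [CommRing A]
    [Algebra R A] [Module.Finite R A] (hR : IsWeaklyLaskerian R R) :
    IsWeaklyLaskerian A A := by
  intro N
  haveI : Module.Finite R (A ⧸ N) :=
    Module.Finite.of_surjective ((N.mkQ).restrictScalars R) N.mkQ_surjective
  have hWL : IsWeaklyLaskerian R (A ⧸ N) := IsWeaklyLaskerian.of_finite hR (A ⧸ N)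
  have hassR : (associatedPrimes R (A ⧸ N)).Finite := hWL.finite_associatedPrimes
  have hsub : associatedPrimes A (A ⧸ N) ⊆
      ⋃ p ∈ associatedPrimes R (A ⧸ N),
        {P : Ideal A | P.IsPrime ∧ Ideal.comap (algebraMap R A) P = p} := by
    rintro P ⟨hP, x, hx⟩
    haveI := hP
    have hcp : (Ideal.comap (algebraMap R A) P) ∈ associatedPrimes R (A ⧸ N) := by
      refine ⟨Ideal.IsPrime.comap _, x, ?_⟩
      ext r
      rw [Ideal.mem_comap, hx]
      constructor
      · rintro ⟨n, hn⟩
        refine ⟨n, ?_⟩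
        rw [Submodule.mem_colon_singleton, Submodule.mem_bot] at hn ⊢
        rwa [← map_pow, algebraMap_smul] at hn
      · rintro ⟨n, hn⟩
        refine ⟨n, ?_⟩
        rw [Submodule.mem_colon_singleton, Submodule.mem_bot] at hn ⊢
        rwa [← map_pow, algebraMap_smul]
    exact Set.mem_biUnion hcp ⟨hP, rfl⟩
  exact Set.Finite.subset
    (hassR.biUnion fun p hp => IsWeaklyLaskerian.finite_primes_over p hp.isPrime) hsub
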